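/- Let M = M_{p^α, bp^α} be a local singular ACM with α = β > 1 (so p^α ∈ M). Then the atoms of M are exactly the elements x ∈ M with α ≤ v_p(x) ≤ 2α − 1. -/

import Mathlib

/-- Membership in the arithmetical congruence monoid `M_{a,b} = (a + b ℕ₀) ∪ {1}`. -/
def acmMem (a b x : ℕ) : Prop := x = 1 ∨ ∃ k : ℕ, x = a + k * b

/-- `x` is an atom (irreducible) of `M_{a,b}`. -/
def acmAtom (a b x : ℕ) : Prop :=
  acmMem a b x ∧ x ≠ 1 ∧
    ∀ y z : ℕ, acmMem a b y → acmMem a b z → x = y * z → y = 1 ∨ z = 1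

/-- `s` is a factorization of `x` into atoms of `M_{a,b}`. -/
def acmFactorization (a b x : ℕ) (s : Multiset ℕ) : Prop :=
  (∀ u ∈ s, acmAtom a b u) ∧ s.prod = x

/-- The distance between two factorizations. -/
def facDist (s t : Multiset ℕ) : ℕ := max (Multiset.card (s - t)) (Multiset.card (t - s))

/-- There is an `N`-chain of factorizations of `x` from `z₁` to `z₂` in `M_{a,b}`. -/
def acmNChain (a b x N : ℕ) (z₁ z₂ : Multiset ℕ) : Prop :=
  ∃ L : List (Multiset ℕ), L ≠ [] ∧ L.head? = some z₁ ∧ L.getLast? = some z₂ ∧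
    (∀ z ∈ L, acmFactorization a b x z) ∧ L.Chain' (fun s t => facDist s t ≤ N)

/-- The set of `N` such that any two factorizations of any element of `M_{a,b}`
are connected by an `N`-chain; `c(M) = n` iff `n` is the least element of this set. -/
def acmCatSet (a b : ℕ) : Set ℕ :=
  {N | ∀ x, acmMem a b x → ∀ z₁ z₂, acmFactorization a b x z₁ →
      acmFactorization a b x z₂ → acmNChain a b x N z₁ z₂}

/-- Divisibility inside the monoid `M_{a,b}`. -/
def acmDvd (a b x y : ℕ) : Prop := ∃ k, acmMem a b k ∧ x * k = y

/-- `s` is a bullet of `x` in `M_{a,b}`. -/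
def acmBullet (a b x : ℕ) (s : Multiset ℕ) : Prop :=
  (∀ u ∈ s, acmAtom a b u) ∧ acmDvd a b x s.prod ∧
    ∀ t : Multiset ℕ, t ≤ s → t ≠ s → ¬ acmDvd a b x t.prod

/-- Omega primality of `x` in `M_{a,b}`: the sup of the lengths of bullets of `x`. -/
noncomputable def acmOmega (a b x : ℕ) : ℕ∞ :=
  sSup {n : ℕ∞ | ∃ s : Multiset ℕ, acmBullet a b x s ∧ (Multiset.card s : ℕ∞) = n}

/-- The set of factorization lengths of `x` in `M_{a,b}`. -/
def acmLengthSet (a b x : ℕ) : Set ℕ :=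
  {n | ∃ s : Multiset ℕ, acmFactorization a b x s ∧ Multiset.card s = n}

/-- `x` has at least two distinct factorization lengths. -/
def acmLI (a b x : ℕ) : Prop := ∃ m ∈ acmLengthSet a b x, ∃ n ∈ acmLengthSet a b x, m ≠ n

/-- The length density of an element `x` of `M_{a,b}`. -/
noncomputable def acmLD (a b x : ℕ) : ℝ :=
  (((acmLengthSet a b x).ncard : ℝ) - 1) /
    (((sSup (acmLengthSet a b x) : ℕ) : ℝ) - ((sInf (acmLengthSet a b x) : ℕ) : ℝ))


/-- For the local singular ACM `M = M_{p^α, b p^α}` with `α = β > 1`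
(`p^α ∈ M`), the atoms of `M` are exactly the elements with `α ≤ v_p(x) ≤ 2α - 1`. -/
theorem local_atoms_alpha_eq_beta (p b α : ℕ) (hp : p.Prime) (hpb : ¬ p ∣ b)
    (hα : 1 < α) (hacm : p ^ α * p ^ α ≡ p ^ α [MOD b * p ^ α]) :
    ∀ x : ℕ, acmMem (p ^ α) (b * p ^ α) x →
      (acmAtom (p ^ α) (b * p ^ α) x ↔
        α ≤ x.factorization p ∧ x.factorization p ≤ 2 * α - 1) := by
  have hp1 : 1 < p := hp.one_lt
  have hpa0 : 0 < p ^ α := Nat.pow_pos (by omega)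
  have hpa1 : 1 < p ^ α := Nat.one_lt_pow (by omega) hp1
  have hdvd : b * p ^ α ∣ p ^ α * p ^ α - p ^ α :=
    (Nat.modEq_iff_dvd' (Nat.le_mul_of_pos_left _ hpa0)).mp hacm.symm
  have hb_dvd : b ∣ p ^ α - 1 := by
    have h1 : p ^ α * p ^ α - p ^ α = p ^ α * (p ^ α - 1) := by
      rw [Nat.mul_sub, Nat.mul_one]
    rw [h1, mul_comm b (p ^ α)] at hdvd
    exact (Nat.mul_dvd_mul_iff_left hpa0).mp hdvd
  have hbmod : p ^ α ≡ 1 [MOD b] :=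
    ((Nat.modEq_iff_dvd' (le_of_lt hpa1)).mpr hb_dvd).symm
  intro x hx
  constructor
  · rintro ⟨hxm, hx1, hatom⟩
    obtain hx1' | ⟨k, hk⟩ := hxm
    · exact absurd hx1' hx1
    have hxeq : x = p ^ α * (1 + k * b) := by rw [hk]; ring
    have hm0 : 1 + k * b ≠ 0 := by simp
    have hx0 : x ≠ 0 := by rw [hxeq]; exact Nat.mul_ne_zero hpa0.ne' hm0
    have hdvdx : p ^ α ∣ x := ⟨1 + k * b, hxeq⟩
    have hlow : α ≤ x.factorization p :=
      (hp.pow_dvd_iff_le_factorization hx0).mp hdvdx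
    refine ⟨hlow, ?_⟩
    by_contra hhigh
    have h2a : p ^ (2 * α) ∣ x := (hp.pow_dvd_iff_le_factorization hx0).mpr (by omega)
    have hm : p ^ α ∣ 1 + k * b := by
      have h2 : p ^ α * p ^ α ∣ p ^ α * (1 + k * b) := by
        rw [← pow_add, ← hxeq]
        have : α + α = 2 * α := by ring
        rw [this]; exact h2a
      exact (Nat.mul_dvd_mul_iff_left hpa0).mp h2
    obtain ⟨w, hw⟩ := hm
    have hw0 : w ≠ 0 := by rintro rfl; simp at hw
    have hw1 : w ≡ 1 [MOD b] := by
      have h1 : (1 + k * b) ≡ 1 [MOD b] := by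
        simp [Nat.ModEq, Nat.add_mul_mod_self_right]
      calc w = 1 * w := (one_mul w).symm
        _ ≡ p ^ α * w [MOD b] := (Nat.ModEq.mul_right w hbmod.symm)
        _ = 1 + k * b := hw.symm
        _ ≡ 1 [MOD b] := h1
    have hbw : b ∣ w - 1 := (Nat.modEq_iff_dvd' (Nat.one_le_iff_ne_zero.mpr hw0)).mp hw1.symm
    obtain ⟨k', hk'⟩ := hbw
    have hweq : w = b * k' + 1 :=
      (Nat.sub_eq_iff_eq_add (Nat.one_le_iff_ne_zero.mpr hw0)).mp hk'
    have hzmem : acmMem (p ^ α) (b * p ^ α) (1 + k * b) := by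
      right; exact ⟨k', by rw [hw, hweq]; ring⟩
    have hfin := hatom (p ^ α) (1 + k * b) (Or.inr ⟨0, by ring⟩) hzmem hxeq
    rcases hfin with h | h
    · omega
    · rw [h] at hw
      have : p ^ α ∣ 1 := ⟨w, hw⟩
      have := Nat.le_of_dvd one_pos this
      omega
  · rintro ⟨hlow, hhigh⟩
    have hx1 : x ≠ 1 := by
      rintro rfl; simp at hlow; omega
    refine ⟨hx, hx1, ?_⟩
    rintro y z hy hz rfl
    by_contra hc
    push_neg at hc
    obtain ⟨hy1, hz1⟩ := hc
    obtain hy' | ⟨k₁, hk₁⟩ := hy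
    · exact hy1 hy'
    obtain hz' | ⟨k₂, hk₂⟩ := hz
    · exact hz1 hz'
    have hyd : p ^ α ∣ y := ⟨1 + k₁ * b, by rw [hk₁]; ring⟩
    have hzd : p ^ α ∣ z := ⟨1 + k₂ * b, by rw [hk₂]; ring⟩
    have hy0 : y ≠ 0 := by rw [hk₁]; exact (Nat.add_pos_left hpa0 _).ne'
    have hz0 : z ≠ 0 := by rw [hk₂]; exact (Nat.add_pos_left hpa0 _).ne'
    have hyz0 : y * z ≠ 0 := Nat.mul_ne_zero hy0 hz0
    have h2 : p ^ (2 * α) ∣ y * z := by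
      rw [two_mul, pow_add]; exact mul_dvd_mul hyd hzd
    have := (hp.pow_dvd_iff_le_factorization hyz0).mp h2
    omega
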